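/- arXiv:1312.3349 — 4 statements merged into one kernel-verified Lean document; each statement's English description precedes it below -/
import Mathlib

section
/- For fixed t ∈ (0,T), as β → ∞ the trajectory x_β(t) = X₀·B·sinh(k(T−t)+A)/sinh(kT+2A) + X_T·B·sinh(kt)/sinh(kT+2A), where A = log(√((β+k)/(β−k))), B = k/√λ, and k = k(β) satisfies k² = λβ²/(λ+β²) with λ > 0, converges to the Almgren–Chriss solution X₀·sinh(√λ(T−t))/sinh(√λ T) + X_T·sinh(√λ t)/sinh(√λ T). -/
open Filter Real

private noncomputable def kfun (lam β : ℝ) : ℝ := Real.sqrt (lam * β ^ 2 / (lam + β ^ 2))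

private lemma hk_tendsto (lam : ℝ) (hlam : 0 < lam) :
    Filter.Tendsto (kfun lam) Filter.atTop (nhds (Real.sqrt lam)) := by
  have h1 : Tendsto (fun β : ℝ => lam / β ^ 2 + 1) atTop (nhds 1) := by
    have h0 : Tendsto (fun β : ℝ => lam / β ^ 2) atTop (nhds 0) :=
      Tendsto.div_atTop tendsto_const_nhds (tendsto_pow_atTop two_ne_zero)
    simpa using h0.add tendsto_const_nhds
  have h2 : Tendsto (fun β : ℝ => lam / (lam / β ^ 2 + 1)) atTop (nhds lam) := by
    simpa [Pi.div_def] using tendsto_const_nhds.div h1 one_ne_zero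
  have hin : Tendsto (fun β : ℝ => lam * β ^ 2 / (lam + β ^ 2)) atTop (nhds lam) := by
    refine h2.congr' ?_
    filter_upwards [eventually_gt_atTop (0:ℝ)] with β hβ
    have hβ2 : (0:ℝ) < β ^ 2 := by positivity
    have hd : (0:ℝ) < lam + β ^ 2 := by positivity
    field_simp
  exact (Real.continuous_sqrt.tendsto lam).comp hin

private lemma k_le (lam β : ℝ) (hlam : 0 < lam) (hβ : 0 < β) :
    kfun lam β ≤ Real.sqrt lam := by
  apply Real.sqrt_le_sqrt
  rw [div_le_iff₀ (by positivity)]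
  nlinarith [sq_nonneg β]

private lemma hA_tendsto (lam : ℝ) (hlam : 0 < lam) :
    Filter.Tendsto (fun β => Real.log (Real.sqrt ((β + kfun lam β) / (β - kfun lam β))))
      Filter.atTop (nhds 0) := by
  have hs0 : 0 < Real.sqrt lam := Real.sqrt_pos.mpr hlam
  have hkβ : Tendsto (fun β => kfun lam β / β) atTop (nhds 0) := by
    have := (hk_tendsto lam hlam).mul tendsto_inv_atTop_zero
    simpa [div_eq_mul_inv] using this
  have hnum : Tendsto (fun β => 1 + kfun lam β / β) atTop (nhds 1) := by
    simpa using tendsto_const_nhds.add hkβ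
  have hden : Tendsto (fun β => 1 - kfun lam β / β) atTop (nhds 1) := by
    simpa using tendsto_const_nhds.sub hkβ
  have hratio : Tendsto (fun β => (β + kfun lam β) / (β - kfun lam β)) atTop (nhds 1) := by
    have h := hnum.div hden one_ne_zero
    rw [div_one] at h
    refine h.congr' ?_
    filter_upwards [eventually_gt_atTop (Real.sqrt lam)] with β hβ
    have hβ0 : 0 < β := lt_trans hs0 hβ
    have hk1 : kfun lam β ≤ Real.sqrt lam := k_le lam β hlam hβ0
    have hbk : 0 < β - kfun lam β := by linarith
    have e1 : 1 + kfun lam β / β = (β + kfun lam β) / β := by field_simp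
    have e2 : 1 - kfun lam β / β = (β - kfun lam β) / β := by field_simp
    simp only [Pi.div_apply]
    rw [e1, e2]
    field_simp
  have h1 : Tendsto (fun β => Real.sqrt ((β + kfun lam β) / (β - kfun lam β))) atTop (nhds 1) := by
    simpa [Function.comp_def] using (Real.continuous_sqrt.tendsto 1).comp hratio
  have := ((Real.continuousAt_log one_ne_zero).tendsto).comp h1
  simpa [Function.comp_def] using this

theorem stmt1 (X₀ X_T T t lam : ℝ) (hlam : 0 < lam) (hT : 0 < T)
    (ht : t ∈ Set.Ioo 0 T) :
    Filter.Tendsto (fun β : ℝ =>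
      let k := Real.sqrt (lam * β ^ 2 / (lam + β ^ 2));
      let A := Real.log (Real.sqrt ((β + k) / (β - k)));
      let B := k / Real.sqrt lam;
      X₀ * B * Real.sinh (k * (T - t) + A) / Real.sinh (k * T + 2 * A)
        + X_T * B * Real.sinh (k * t) / Real.sinh (k * T + 2 * A))
      Filter.atTop
      (nhds (X₀ * Real.sinh (Real.sqrt lam * (T - t)) / Real.sinh (Real.sqrt lam * T)
        + X_T * Real.sinh (Real.sqrt lam * t) / Real.sinh (Real.sqrt lam * T))) := by
  obtain ⟨ht0, htT⟩ := ht
  set s := Real.sqrt lam with hs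
  have hs0 : 0 < s := Real.sqrt_pos.mpr hlam
  have hk := hk_tendsto lam hlam
  have hA := hA_tendsto lam hlam
  have hsinh : Real.sinh (s * T) ≠ 0 := ne_of_gt (Real.sinh_pos_iff.mpr (by positivity))
  have hB : Tendsto (fun β => kfun lam β / s) atTop (nhds 1) := by
    simpa [← hs, div_self hs0.ne'] using hk.div_const s
  have hden : Tendsto (fun β =>
      Real.sinh (kfun lam β * T + 2 * Real.log (Real.sqrt ((β + kfun lam β) / (β - kfun lam β)))))
      atTop (nhds (Real.sinh (s * T))) := by
    have h0 : Tendsto (fun β =>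
        kfun lam β * T + 2 * Real.log (Real.sqrt ((β + kfun lam β) / (β - kfun lam β))))
        atTop (nhds (s * T)) := by
      simpa using (hk.mul_const T).add (hA.const_mul 2)
    exact (Real.continuous_sinh.tendsto _).comp h0
  have hn1 : Tendsto (fun β =>
      Real.sinh (kfun lam β * (T - t) + Real.log (Real.sqrt ((β + kfun lam β) / (β - kfun lam β)))))
      atTop (nhds (Real.sinh (s * (T - t)))) := by
    have h0 : Tendsto (fun β =>
        kfun lam β * (T - t) + Real.log (Real.sqrt ((β + kfun lam β) / (β - kfun lam β))))
        atTop (nhds (s * (T - t))) := by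
      simpa using (hk.mul_const (T - t)).add hA
    exact (Real.continuous_sinh.tendsto _).comp h0
  have hn2 : Tendsto (fun β => Real.sinh (kfun lam β * t)) atTop (nhds (Real.sinh (s * t))) :=
    (Real.continuous_sinh.tendsto _).comp (hk.mul_const t)
  have hmain := (((tendsto_const_nhds (x := X₀)).mul hB).mul hn1).div hden hsinh |>.add
    ((((tendsto_const_nhds (x := X_T)).mul hB).mul hn2).div hden hsinh)
  have : X₀ * 1 * Real.sinh (s * (T - t)) / Real.sinh (s * T)
      + X_T * 1 * Real.sinh (s * t) / Real.sinh (s * T)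
      = X₀ * Real.sinh (s * (T - t)) / Real.sinh (s * T)
      + X_T * Real.sinh (s * t) / Real.sinh (s * T) := by ring
  rw [this] at hmain
  exact hmain
end

section
/- Let K : [0,∞) → ℝ be continuous, nonnegative, nonincreasing, and convex. Then for any finite set of trade times t₁ < t₂ < … < t_N and trade sizes q₁,…,q_N ∈ ℝ, the quadratic form ∑_{i=1}^N ∑_{j=1}^N q_i q_j K(|t_i − t_j|) is nonnegative. -/
open MeasureTheory

lemma tent_psd (a : ℝ) (ha : 0 ≤ a) (N : ℕ) (t q : Fin N → ℝ) :
    0 ≤ ∑ i : Fin N, ∑ j : Fin N, q i * q j * max 0 (a - |t i - t j|) := by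
  set g : Fin N → ℝ → ℝ := fun i => (Set.Ico (t i) (t i + a)).indicator (fun _ => q i) with hg
  have hprod : ∀ i j : Fin N, (fun x => g i x * g j x) =
      (Set.Ico (t i) (t i + a) ∩ Set.Ico (t j) (t j + a)).indicator (fun _ => q i * q j) := by
    intro i j
    funext x
    simp only [hg, Set.indicator, Set.mem_inter_iff]
    by_cases h1 : x ∈ Set.Ico (t i) (t i + a) <;> by_cases h2 : x ∈ Set.Ico (t j) (t j + a) <;>
      simp [h1, h2]
  have hint : ∀ i j : Fin N, Integrable (fun x => g i x * g j x) volume := by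
    intro i j
    rw [hprod i j]
    apply (integrable_indicator_iff (measurableSet_Ico.inter measurableSet_Ico)).2
    exact integrableOn_const (lt_of_le_of_lt (measure_mono Set.inter_subset_left) (by simp [Real.volume_Ico])).ne
  have harith : ∀ x y : ℝ, (x + a) ⊓ (y + a) - x ⊔ y = a - |x - y| := by
    intro x y
    rcases le_total x y with h | h
    · rw [abs_of_nonpos (by linarith), inf_eq_left.2 (by linarith), sup_eq_right.2 h]; ring
    · rw [abs_of_nonneg (by linarith), inf_eq_right.2 (by linarith), sup_eq_left.2 h]; ring
  have key : ∀ i j : Fin N, ∫ x, g i x * g j x = q i * q j * max 0 (a - |t i - t j|) := by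
    intro i j
    rw [hprod i j, integral_indicator_const _ (measurableSet_Ico.inter measurableSet_Ico)]
    rw [Set.Ico_inter_Ico, Real.volume_real_Ico, smul_eq_mul, mul_comm, harith, max_comm]
  have expand : ∫ x, (∑ i : Fin N, g i x)^2 = ∑ i : Fin N, ∑ j : Fin N, q i * q j * max 0 (a - |t i - t j|) := by
    have h2 : ∀ x, (∑ i : Fin N, g i x)^2 = ∑ i : Fin N, ∑ j : Fin N, g i x * g j x := by
      intro x; rw [sq, Finset.sum_mul_sum]
    simp_rw [h2]
    rw [integral_finset_sum _ (fun i _ => integrable_finset_sum _ (fun j _ => hint i j))]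
    refine Finset.sum_congr rfl fun i _ => ?_
    rw [integral_finset_sum _ (fun j _ => hint i j)]
    exact Finset.sum_congr rfl fun j _ => key i j
  rw [← expand]
  exact integral_nonneg fun x => sq_nonneg _

lemma rep (K : ℝ → ℝ) (hnonneg : ∀ t ∈ Set.Ici (0 : ℝ), 0 ≤ K t)
    (hanti : AntitoneOn K (Set.Ici 0))
    (hconv : ConvexOn ℝ (Set.Ici 0) K) :
    ∀ L : List ℝ, L.Pairwise (· < ·) → (∀ s ∈ L, 0 ≤ s) →
    ∃ c : ℝ, ∃ β : ℝ → ℝ, 0 ≤ c ∧ (∀ s, 0 ≤ β s) ∧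
      (∀ d ∈ L, K d = c + (L.map (fun s => β s * max 0 (s - d))).sum) ∧
      (∀ x, 0 ≤ x → (∀ s ∈ L, x ≤ s) →
        c + (L.map (fun s => β s * (s - x))).sum ≤ K x) := by
  intro L
  induction L with
  | nil =>
    intro _ _
    exact ⟨0, fun _ => 0, le_refl 0, fun _ => le_refl 0, by simp, by
      intro x hx _; simpa using hnonneg x hx⟩
  | cons a L' ih =>
    intro hsort hpos
    have hsort' : L'.Pairwise (· < ·) := hsort.of_cons
    have halt : ∀ s ∈ L', a < s := fun s hs => (List.pairwise_cons.1 hsort).1 s hs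
    have hpos' : ∀ s ∈ L', 0 ≤ s := fun s hs => hpos s (List.mem_cons_of_mem _ hs)
    have ha0 : 0 ≤ a := hpos a (List.mem_cons_self)
    obtain ⟨c, β, hc, hβ, heq, hext⟩ := ih hsort' hpos'
    cases L' with
    | nil =>
      refine ⟨K a, fun _ => 0, hnonneg a ha0, fun _ => le_refl 0, ?_, ?_⟩
      · intro d hd
        simp only [List.mem_singleton] at hd
        subst hd; simp
      · intro x hx hxle
        simp only [List.map_cons, List.map_nil, List.sum_cons, List.sum_nil, zero_mul, add_zero]
        exact hanti hx ha0 (hxle a (List.mem_cons_self))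
    | cons s₀ M =>
      set L' := s₀ :: M with hL'
      have hs₀L' : s₀ ∈ L' := List.mem_cons_self
      have has₀ : a < s₀ := halt s₀ hs₀L'
      have hs₀le : ∀ s ∈ L', s₀ ≤ s := by
        intro s hs
        rcases List.mem_cons.1 hs with h | h
        · exact le_of_eq h.symm
        · exact le_of_lt ((List.pairwise_cons.1 hsort').1 s h)
      have hfa : c + (L'.map (fun s => β s * (s - a))).sum ≤ K a :=
        hext a ha0 (fun s hs => le_of_lt (halt s hs))
      set f : ℝ → ℝ := fun x => c + (L'.map (fun s => β s * (s - x))).sum with hf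
      have hfdef : ∀ x : ℝ, f x = c + (L'.map (fun s => β s * (s - x))).sum := fun _ => rfl
      set δ : ℝ := (K a - f a) / (s₀ - a) with hδ
      have hδ0 : 0 ≤ δ := div_nonneg (by simpa [hfdef] using sub_nonneg.2 hfa) (by linarith)
      have hδmul : δ * (s₀ - a) = K a - f a := by
        rw [hδ, div_mul_cancel₀ _ (by linarith : s₀ - a ≠ 0)]
      set β' : ℝ → ℝ := fun s => if s = s₀ then β s₀ + δ else if s = a then 0 else β s with hβ'
      have hβ'0 : ∀ s, 0 ≤ β' s := by
        intro s; simp only [hβ']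
        split
        · linarith [hβ s₀]
        · split
          · exact le_refl 0
          · exact hβ s
      have hβ'eqL' : ∀ s ∈ L', s ≠ s₀ → β' s = β s := by
        intro s hs hne
        simp only [hβ', if_neg hne, if_neg (ne_of_gt (halt s hs))]
      have hfs₀ : f s₀ = K s₀ := by
        rw [hfdef, heq s₀ hs₀L']
        congr 1
        exact congrArg List.sum (List.map_congr_left (fun s hs => by
          rw [max_eq_right (by linarith [hs₀le s hs] : (0:ℝ) ≤ s - s₀)]))
      have hsum' : ∀ x : ℝ, (L'.map (fun s => β' s * (s - x))).sum
          = (L'.map (fun s => β s * (s - x))).sum + δ * (s₀ - x) := by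
        intro x
        have hs₀M : ∀ s ∈ M, s ≠ s₀ := by
          intro s hs
          exact ne_of_gt ((List.pairwise_cons.1 hsort').1 s hs)
        rw [hL']
        simp only [List.map_cons, List.sum_cons]
        have h1 : β' s₀ = β s₀ + δ := by simp [hβ']
        have h2 : (M.map (fun s => β' s * (s - x))).sum = (M.map (fun s => β s * (s - x))).sum :=
          congrArg List.sum (List.map_congr_left (fun s hs => by
            rw [hβ'eqL' s (List.mem_cons_of_mem _ hs) (hs₀M s hs)]))
        rw [h1, h2]; ring
      refine ⟨c, β', hc, hβ'0, ?_, ?_⟩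
      · intro d hd
        rcases List.mem_cons.1 hd with h | h
        · subst h
          simp only [List.map_cons, List.sum_cons, sub_self, max_self, mul_zero, zero_add]
          have hmax : ∀ s ∈ L', β' s * max 0 (s - d) = β' s * (s - d) := by
            intro s hs
            rw [max_eq_right (le_of_lt (sub_pos.2 (halt s hs)))]
          rw [List.map_congr_left hmax, hsum' d]
          have h1 := hfdef d
          linarith [hδmul]
        · have hds₀ : s₀ ≤ d := hs₀le d h
          simp only [List.map_cons, List.sum_cons]
          have hhead : β' a * max 0 (a - d) = 0 := by
            rw [max_eq_left (by linarith [halt d h]), mul_zero]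
          have htail : (L'.map (fun s => β' s * max 0 (s - d))).sum
              = (L'.map (fun s => β s * max 0 (s - d))).sum := by
            refine congrArg List.sum (List.map_congr_left (fun s hs => ?_))
            by_cases hse : s = s₀
            · subst hse
              rw [max_eq_left (by linarith), mul_zero, mul_zero]
            · rw [hβ'eqL' s hs hse]
          rw [hhead, htail, zero_add, ← heq d h]
      · intro x hx hxle
        have hxa : x ≤ a := hxle a (List.mem_cons_self)
        simp only [List.map_cons, List.sum_cons]
        have hβ'a : β' a = 0 := by
          rw [hβ']; simp [ne_of_lt has₀]
        rw [hβ'a, zero_mul, zero_add, hsum' x]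
        have hgoal : f x + δ * (s₀ - x) ≤ K x := by
          rcases eq_or_lt_of_le hxa with h | h
          · subst h
            linarith [hδmul]
          · have hslope := hconv.slope_mono_adjacent (Set.mem_Ici.2 hx)
              (Set.mem_Ici.2 (by linarith : (0:ℝ) ≤ s₀)) h has₀
            have hKa : f a + δ * (s₀ - a) = K a := by linarith [hδmul]
            have hSlin : ∀ u v : ℝ, (L'.map (fun s => β s * (s - u))).sum
                - (L'.map (fun s => β s * (s - v))).sum
                = (v - u) * (L'.map (fun s => β s)).sum := by
              intro u v
              induction L' with
              | nil => simp
              | cons w M' ihM =>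
                simp only [List.map_cons, List.sum_cons] at *
                linear_combination ihM
            set S : ℝ := (L'.map (fun s => β s)).sum + δ with hS
            have hdiff : (f x + δ * (s₀ - x)) - (f a + δ * (s₀ - a)) = (a - x) * S := by
              rw [hfdef, hfdef, hS]
              have := hSlin x a
              ring_nf
              ring_nf at this
              linarith [this]
            have hdiff2 : (f a + δ * (s₀ - a)) - f s₀ = (s₀ - a) * S := by
              rw [hfdef, hfdef, hS]
              have := hSlin a s₀
              linear_combination this
            have hKas₀ : K a - K s₀ = (s₀ - a) * S := by
              rw [← hKa, ← hfs₀]; linarith [hdiff2]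
            have hax : 0 < a - x := by linarith
            have hs₀a : 0 < s₀ - a := by linarith
            have hm : (K s₀ - K a) / (s₀ - a) = -S := by
              rw [div_eq_iff (ne_of_gt hs₀a)]
              linear_combination -hKas₀
            rw [hm] at hslope
            have hKx : K a - K x ≤ (a - x) * (-S) := by
              rw [div_le_iff₀ hax] at hslope
              linarith [hslope]
            have hval : f x + δ * (s₀ - x) = K a + (a - x) * S := by
              rw [← hKa]; linarith [hdiff]
            nlinarith [hval, hKx]
        have h1 := hfdef x
        linarith [hgoal]

theorem stmt8 (K : ℝ → ℝ)
    (hcont : ContinuousOn K (Set.Ici 0))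
    (hnonneg : ∀ t ∈ Set.Ici (0 : ℝ), 0 ≤ K t)
    (hanti : AntitoneOn K (Set.Ici 0))
    (hconv : ConvexOn ℝ (Set.Ici 0) K)
    (N : ℕ) (t q : Fin N → ℝ) (ht : StrictMono t) :
    0 ≤ ∑ i : Fin N, ∑ j : Fin N, q i * q j * K |t i - t j| := by
  classical
  set D : Finset ℝ := Finset.image (fun p : Fin N × Fin N => |t p.1 - t p.2|) Finset.univ with hD
  set L : List ℝ := D.sort (· ≤ ·) with hL
  have hsorted : L.Pairwise (· < ·) := List.sortedLT_iff_pairwise.1 (Finset.sortedLT_sort D)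
  have hmemD : ∀ i j : Fin N, |t i - t j| ∈ D := by
    intro i j
    exact Finset.mem_image.2 ⟨(i, j), Finset.mem_univ _, rfl⟩
  have hmemL : ∀ i j : Fin N, |t i - t j| ∈ L := by
    intro i j
    rw [hL, Finset.mem_sort]
    exact hmemD i j
  have hposL : ∀ s ∈ L, 0 ≤ s := by
    intro s hs
    rw [hL, Finset.mem_sort, hD, Finset.mem_image] at hs
    obtain ⟨p, _, rfl⟩ := hs
    exact abs_nonneg _
  obtain ⟨c, β, hc, hβ, heq, -⟩ := rep K hnonneg hanti hconv L hsorted hposL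
  have hlist_fin : ∀ g : ℝ → ℝ, (L.map g).sum = ∑ s ∈ D, g s := by
    intro g
    have h1 := List.sum_toFinset g (Finset.sort_nodup (s := D) (r := (· ≤ ·)))
    rw [Finset.sort_toFinset] at h1
    rw [hL, ← h1]
  have hK : ∀ i j : Fin N, K |t i - t j| = c + ∑ s ∈ D, β s * max 0 (s - |t i - t j|) := by
    intro i j
    rw [heq _ (hmemL i j), hlist_fin]
  have key : ∑ i : Fin N, ∑ j : Fin N, q i * q j * K |t i - t j|
      = (∑ i : Fin N, q i)^2 * c
        + ∑ s ∈ D, β s * (∑ i : Fin N, ∑ j : Fin N, q i * q j * max 0 (s - |t i - t j|)) := by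
    simp_rw [hK, mul_add, Finset.mul_sum, Finset.sum_add_distrib]
    congr 1
    · rw [sq, Finset.sum_mul_sum, Finset.sum_mul]
      exact Finset.sum_congr rfl fun i _ => by rw [Finset.sum_mul]
    · have h1 : ∀ i : Fin N, (∑ j : Fin N, ∑ s ∈ D, q i * q j * (β s * max 0 (s - |t i - t j|)))
          = ∑ s ∈ D, ∑ j : Fin N, q i * q j * (β s * max 0 (s - |t i - t j|)) :=
        fun i => Finset.sum_comm
      have hswap : ∑ i : Fin N, ∑ j : Fin N, ∑ s ∈ D, q i * q j * (β s * max 0 (s - |t i - t j|))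
          = ∑ s ∈ D, ∑ i : Fin N, ∑ j : Fin N, q i * q j * (β s * max 0 (s - |t i - t j|)) := by
        rw [Finset.sum_congr rfl (fun i _ => h1 i)]
        exact Finset.sum_comm
      rw [hswap]
      refine Finset.sum_congr rfl fun s _ => ?_
      exact Finset.sum_congr rfl fun i _ => Finset.sum_congr rfl fun j _ => by ring
  rw [key]
  have h1 : 0 ≤ (∑ i : Fin N, q i)^2 * c := mul_nonneg (sq_nonneg _) hc
  have h2 : 0 ≤ ∑ s ∈ D, β s * (∑ i : Fin N, ∑ j : Fin N, q i * q j * max 0 (s - |t i - t j|)) := by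
    refine Finset.sum_nonneg fun s hs => ?_
    have hs0 : 0 ≤ s := by
      rw [hD, Finset.mem_image] at hs
      obtain ⟨p, _, rfl⟩ := hs
      exact abs_nonneg _
    exact mul_nonneg (hβ s) (tent_psd s hs0 N t q)
  linarith
end

section
/- For α > 0, κ > 0, c > 0, define the trading rate q(t) = c·α·t^{α−1} + √κ·t^{α−1/2}·Γ(α+1)/Γ(α+1/2) for t > 0. Then the Laplace transform of q equals (cs + √(κs))·Γ(α+1)/s^{α+1} for every s > 0; equivalently, q(t) solves the convolution equation ∫₀^t q(τ)·K(t−τ) dτ = t^α where K has Laplace transform 1/(cs+√(κs)). -/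
open MeasureTheory Set Real

lemma lap_integrable {β s : ℝ} (hβ : -1 < β) (hs : 0 < s) :
    IntegrableOn (fun t : ℝ => Real.exp (-s * t) * t ^ β) (Set.Ioi 0) := by
  have h := integrableOn_rpow_mul_exp_neg_mul_rpow (p := 1) hβ one_pos hs
  refine h.congr_fun (fun x hx => ?_) measurableSet_Ioi
  beta_reduce; rw [Real.rpow_one, mul_comm]

lemma lap_eq {β s : ℝ} (hβ : -1 < β) (hs : 0 < s) :
    ∫ t in Set.Ioi (0 : ℝ), Real.exp (-s * t) * t ^ β
      = Real.Gamma (β + 1) / s ^ (β + 1) := by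
  have h := Real.integral_rpow_mul_exp_neg_mul_Ioi (a := β + 1) (r := s) (by linarith) hs
  rw [add_sub_cancel_right] at h
  have : ∫ t in Set.Ioi (0 : ℝ), Real.exp (-s * t) * t ^ β
      = ∫ t in Set.Ioi (0 : ℝ), t ^ β * Real.exp (-(s * t)) := by
    congr 1; ext t; rw [neg_mul, mul_comm]
  rw [this, h, Real.div_rpow (by norm_num) hs.le, Real.one_rpow, one_div, div_eq_inv_mul]

theorem stmt13 (α κ c : ℝ) (hα : 0 < α) (hκ : 0 < κ) (hc : 0 < c)
    (q : ℝ → ℝ)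
    (hq : ∀ t : ℝ, 0 < t → q t = c * α * t ^ (α - 1)
      + Real.sqrt κ * t ^ (α - 1 / 2) * (Real.Gamma (α + 1) / Real.Gamma (α + 1 / 2))) :
    ∀ s : ℝ, 0 < s →
      (∫ t in Set.Ioi (0 : ℝ), Real.exp (-s * t) * q t)
        = (c * s + Real.sqrt (κ * s)) * Real.Gamma (α + 1) / s ^ (α + 1) := by
  intro s hs
  have h1 : (-1 : ℝ) < α - 1 := by linarith
  have h2 : (-1 : ℝ) < α - 1 / 2 := by linarith
  have i1 := lap_integrable h1 hs
  have i2 := lap_integrable h2 hs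
  have key : (∫ t in Set.Ioi (0 : ℝ), Real.exp (-s * t) * q t)
      = ∫ t in Set.Ioi (0 : ℝ),
        (c * α * (Real.exp (-s * t) * t ^ (α - 1))
          + Real.Gamma (α + 1) / Real.Gamma (α + 1 / 2) * Real.sqrt κ *
            (Real.exp (-s * t) * t ^ (α - 1 / 2))) := by
    refine setIntegral_congr_fun measurableSet_Ioi (fun t ht => ?_)
    rw [hq t ht]; ring
  rw [key, integral_add ((i1.const_mul _)) ((i2.const_mul _)),
    MeasureTheory.integral_const_mul, MeasureTheory.integral_const_mul, lap_eq h1 hs, lap_eq h2 hs]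
  have e1 : α - 1 + 1 = α := by ring
  have e2 : α - 1 / 2 + 1 = α + 1 / 2 := by ring
  rw [e1, e2, Real.Gamma_add_one hα.ne']
  have hG : Real.Gamma (α + 1 / 2) ≠ 0 := (Real.Gamma_pos_of_pos (by linarith)).ne'
  have hsa : (0:ℝ) < s ^ α := Real.rpow_pos_of_pos hs α
  have hsh : (0:ℝ) < s ^ (1/2 : ℝ) := Real.rpow_pos_of_pos hs _
  have hs1 : s ^ (α + 1 : ℝ) = s ^ α * s := by
    rw [Real.rpow_add hs, Real.rpow_one]
  have hs2 : s ^ (α + 1/2 : ℝ) = s ^ α * s ^ (1/2 : ℝ) := by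
    rw [Real.rpow_add hs]
  have hsqrt : Real.sqrt (κ * s) = Real.sqrt κ * s ^ (1/2 : ℝ) := by
    rw [Real.sqrt_mul hκ.le, Real.sqrt_eq_rpow s]
  have hss : s = s ^ (1/2 : ℝ) * s ^ (1/2 : ℝ) := by
    rw [← Real.rpow_add hs]; norm_num
  rw [hs1, hs2, hsqrt]
  have hsq : ((s:ℝ) ^ (1/2:ℝ)) ^ 2 = s := by
    rw [sq, ← Real.rpow_add hs]; norm_num
  field_simp
  linear_combination (-Real.sqrt κ) * hsq
end

section
/- For the kernel K(t) = c⁻¹·exp(κt/c²)·erfc(√(κt/c²)) with c, κ > 0, the cumulative impact of a unit constant trading rate, h(T) = ∫₀^T K(t) dt, is strictly increasing, and h(T)/√T → 2/√(πκ) as T → ∞. -/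
open Real MeasureTheory Set Filter intervalIntegral

noncomputable def erfc (x : ℝ) : ℝ :=
  (2 / Real.sqrt Real.pi) * ∫ u in Set.Ioi x, Real.exp (-u ^ 2)

lemma gauss_integrable : Integrable (fun u : ℝ => Real.exp (-u ^ 2)) := by
  simpa using integrable_exp_neg_mul_sq (b := 1) one_pos

lemma gauss_cont : Continuous (fun u : ℝ => Real.exp (-u ^ 2)) := by
  continuity

lemma erfc_sub (x y : ℝ) :
    erfc y = erfc x - (2 / Real.sqrt Real.pi) * ∫ u in x..y, Real.exp (-u ^ 2) := by
  have key : ∀ z : ℝ, (∫ u in Set.Ioi z, Real.exp (-u ^ 2))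
      = (∫ u : ℝ, Real.exp (-u ^ 2)) - ∫ u in Set.Iic z, Real.exp (-u ^ 2) := by
    intro z
    have := MeasureTheory.integral_add_compl (measurableSet_Iic (a := z)) gauss_integrable
    rw [Set.compl_Iic] at this
    linarith
  have hsub := intervalIntegral.integral_Iic_sub_Iic
    (gauss_integrable.integrableOn (s := Set.Iic x))
    (gauss_integrable.integrableOn (s := Set.Iic y))
  unfold erfc
  rw [key x, key y, ← hsub]
  ring

lemma erfc_hasDerivAt (x : ℝ) :
    HasDerivAt erfc (-((2 / Real.sqrt Real.pi) * Real.exp (-x ^ 2))) x := by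
  have h1 : HasDerivAt (fun y => ∫ u in x..y, Real.exp (-u ^ 2)) (Real.exp (-x ^ 2)) x :=
    intervalIntegral.integral_hasDerivAt_right
      gauss_integrable.intervalIntegrable
      (gauss_cont.stronglyMeasurableAtFilter _ _)
      gauss_cont.continuousAt
  have h2 : HasDerivAt (fun y => erfc x - (2 / Real.sqrt Real.pi) * ∫ u in x..y,
      Real.exp (-u ^ 2)) (-((2 / Real.sqrt Real.pi) * Real.exp (-x ^ 2))) x := by
    simpa using (h1.const_mul (2 / Real.sqrt Real.pi)).const_sub (erfc x)
  exact h2.congr_of_eventuallyEq (Filter.Eventually.of_forall fun y => erfc_sub x y)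

lemma erfc_cont : Continuous erfc :=
  continuous_iff_continuousAt.2 fun x => (erfc_hasDerivAt x).continuousAt

lemma erfc_pos (x : ℝ) : 0 < erfc x := by
  have hpos : 0 < ∫ u in Set.Ioi x, Real.exp (-u ^ 2) := by
    rw [setIntegral_pos_iff_support_of_nonneg_ae
      (Filter.Eventually.of_forall fun u => (Real.exp_pos _).le)
      (gauss_integrable.integrableOn)]
    have hs : Function.support (fun u : ℝ => Real.exp (-u ^ 2)) = Set.univ := by
      ext u; simp [Real.exp_ne_zero]
    rw [hs, Set.univ_inter, Real.volume_Ioi]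
    exact ENNReal.zero_lt_top
  have h2 : 0 < 2 / Real.sqrt Real.pi := by positivity
  exact mul_pos h2 hpos

lemma erfc_zero : erfc 0 = 1 := by
  have := integral_gaussian_Ioi 1
  simp only [neg_mul, one_mul] at this
  unfold erfc
  rw [this]
  have hπ : (0:ℝ) < Real.sqrt Real.pi := Real.sqrt_pos.2 Real.pi_pos
  field_simp

lemma erfc_le_two_exp (x : ℝ) (hx : 0 ≤ x) : erfc x ≤ 2 * Real.exp (-x ^ 2) := by
  have hbound : (∫ u in Set.Ioi x, Real.exp (-u ^ 2))
      ≤ ∫ u in Set.Ioi x, Real.exp (-x ^ 2) * Real.exp (-(u - x) ^ 2) := by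
    apply setIntegral_mono_on
    · exact gauss_integrable.integrableOn
    · exact (((gauss_integrable.comp_sub_right x).const_mul _)).integrableOn
    · exact measurableSet_Ioi
    · intro u hu
      rw [← Real.exp_add]
      apply Real.exp_le_exp.2
      have : x ^ 2 + (u - x) ^ 2 ≤ u ^ 2 := by nlinarith [Set.mem_Ioi.mp hu]
      linarith
  have htrans : (∫ u in Set.Ioi x, Real.exp (-(u - x) ^ 2)) ≤ Real.sqrt Real.pi := by
    have h1 : (∫ u in Set.Ioi x, Real.exp (-(u - x) ^ 2))
        ≤ ∫ u : ℝ, Real.exp (-(u - x) ^ 2) := by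
      apply setIntegral_le_integral (gauss_integrable.comp_sub_right x)
      exact Filter.Eventually.of_forall fun u => (Real.exp_pos _).le
    have h2 : (∫ u : ℝ, Real.exp (-(u - x) ^ 2)) = ∫ u : ℝ, Real.exp (-u ^ 2) :=
      integral_sub_right_eq_self (fun u => Real.exp (-u ^ 2)) x
    have h3 : (∫ u : ℝ, Real.exp (-u ^ 2)) = Real.sqrt Real.pi := by
      simpa using integral_gaussian 1
    rw [h2, h3] at h1
    exact h1
  have hπ : (0:ℝ) < Real.sqrt Real.pi := Real.sqrt_pos.2 Real.pi_pos
  unfold erfc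
  calc (2 / Real.sqrt Real.pi) * ∫ u in Set.Ioi x, Real.exp (-u ^ 2)
      ≤ (2 / Real.sqrt Real.pi) * (Real.exp (-x ^ 2) * Real.sqrt Real.pi) := by
        apply mul_le_mul_of_nonneg_left _ (by positivity)
        calc (∫ u in Set.Ioi x, Real.exp (-u ^ 2))
            ≤ ∫ u in Set.Ioi x, Real.exp (-x ^ 2) * Real.exp (-(u - x) ^ 2) := hbound
          _ = Real.exp (-x ^ 2) * ∫ u in Set.Ioi x, Real.exp (-(u - x) ^ 2) := by
              rw [MeasureTheory.integral_const_mul]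
          _ ≤ Real.exp (-x ^ 2) * Real.sqrt Real.pi := by
              exact mul_le_mul_of_nonneg_left htrans (Real.exp_pos _).le
    _ = 2 * Real.exp (-x ^ 2) := by field_simp

lemma tendsto_sqrt_atTop : Filter.Tendsto Real.sqrt Filter.atTop Filter.atTop := by
  apply Filter.tendsto_atTop_atTop.2
  intro b
  refine ⟨b ^ 2, fun x hx => ?_⟩
  rcases le_or_gt b 0 with hb | hb
  · exact hb.trans (Real.sqrt_nonneg x)
  · have hx0 : 0 ≤ x := le_trans (sq_nonneg b) hx
    exact (Real.le_sqrt hb.le hx0).2 hx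

theorem stmt14 (c κ : ℝ) (hc : 0 < c) (hκ : 0 < κ)
    (K : ℝ → ℝ)
    (hK : ∀ t, K t = c⁻¹ * Real.exp (κ * t / c ^ 2) * erfc (Real.sqrt (κ * t / c ^ 2)))
    (h : ℝ → ℝ) (hh : ∀ T, h T = ∫ t in (0 : ℝ)..T, K t) :
    StrictMonoOn h (Set.Ici 0)
      ∧ Filter.Tendsto (fun T => h T / Real.sqrt T) Filter.atTop
          (nhds (2 / Real.sqrt (Real.pi * κ))) := by
  set a : ℝ := κ / c ^ 2 with ha_def
  have ha : 0 < a := by positivity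
  set E : ℝ → ℝ := fun t => Real.exp (a * t) * erfc (Real.sqrt (a * t)) with hE_def
  have hK' : ∀ t, K t = c⁻¹ * E t := by
    intro t
    have : κ * t / c ^ 2 = a * t := by rw [ha_def]; ring
    rw [hK, this, hE_def, mul_assoc]
  have hEcont : Continuous E := by
    apply Continuous.mul
    · exact Real.continuous_exp.comp (continuous_const.mul continuous_id)
    · exact erfc_cont.comp (Real.continuous_sqrt.comp (continuous_const.mul continuous_id))
  have hKcont : Continuous K := by
    have : K = fun t => c⁻¹ * E t := funext hK'
    rw [this]; exact continuous_const.mul hEcont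
  have hEpos : ∀ t, 0 < E t := fun t => mul_pos (Real.exp_pos _) (erfc_pos _)
  have hKpos : ∀ t, 0 < K t := by
    intro t; rw [hK']
    exact mul_pos (inv_pos.2 hc) (hEpos t)
  -- strict monotonicity
  have hmono : StrictMonoOn h (Set.Ici 0) := by
    intro x hx y hy hxy
    rw [hh, hh]
    have h1 : IntervalIntegrable K volume 0 x := hKcont.intervalIntegrable _ _
    have h2 : IntervalIntegrable K volume x y := hKcont.intervalIntegrable _ _
    have hsplit : (∫ t in (0:ℝ)..y, K t) = (∫ t in (0:ℝ)..x, K t) + ∫ t in x..y, K t :=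
      (intervalIntegral.integral_add_adjacent_intervals h1 h2).symm
    have hpos : 0 < ∫ t in x..y, K t :=
      intervalIntegral.intervalIntegral_pos_of_pos_on h2 (fun t _ => hKpos t) hxy
    linarith
  refine ⟨hmono, ?_⟩
  -- antiderivative
  set g : ℝ → ℝ := fun t => (E t + (2 / Real.sqrt Real.pi) * Real.sqrt (a * t)) / a with hg_def
  have hgderiv : ∀ t : ℝ, 0 < t → HasDerivAt g (E t) t := by
    intro t ht
    have hat : 0 < a * t := mul_pos ha ht
    have h1 : HasDerivAt (fun s : ℝ => a * s) a t := by
      simpa using (hasDerivAt_id t).const_mul a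
    have h2 : HasDerivAt (fun s : ℝ => Real.sqrt (a * s)) (1 / (2 * Real.sqrt (a * t)) * a) t :=
      (Real.hasDerivAt_sqrt hat.ne').comp t h1
    have h3 : HasDerivAt (fun s : ℝ => erfc (Real.sqrt (a * s)))
        (-((2 / Real.sqrt Real.pi) * Real.exp (-(Real.sqrt (a * t)) ^ 2))
          * (1 / (2 * Real.sqrt (a * t)) * a)) t :=
      by have := (erfc_hasDerivAt (Real.sqrt (a * t))).comp t h2; exact this
    have h4 : HasDerivAt (fun s : ℝ => Real.exp (a * s)) (Real.exp (a * t) * a) t := h1.exp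
    have h5 : HasDerivAt E
        (Real.exp (a * t) * a * erfc (Real.sqrt (a * t)) +
          Real.exp (a * t) * (-((2 / Real.sqrt Real.pi) * Real.exp (-(Real.sqrt (a * t)) ^ 2))
            * (1 / (2 * Real.sqrt (a * t)) * a))) t := h4.mul h3
    have h6 : HasDerivAt g
        ((Real.exp (a * t) * a * erfc (Real.sqrt (a * t)) +
          Real.exp (a * t) * (-((2 / Real.sqrt Real.pi) * Real.exp (-(Real.sqrt (a * t)) ^ 2))
            * (1 / (2 * Real.sqrt (a * t)) * a)) +
          (2 / Real.sqrt Real.pi) * (1 / (2 * Real.sqrt (a * t)) * a)) / a) t :=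
      (h5.add (h2.const_mul (2 / Real.sqrt Real.pi))).div_const a
    convert h6 using 1
    rw [Real.sq_sqrt hat.le]
    have hexp : Real.exp (a * t) * Real.exp (-(a * t)) = 1 := by
      rw [← Real.exp_add]; simp
    field_simp [hE_def]
    nlinarith [hexp, Real.exp_pos (a * t), erfc_pos (Real.sqrt (a * t))]
  have hgcont : Continuous g := by
    apply Continuous.div_const
    apply hEcont.add
    exact continuous_const.mul (Real.continuous_sqrt.comp (continuous_const.mul continuous_id))
  have hE0 : E 0 = 1 := by
    simp [hE_def, erfc_zero]
  have hg0 : g 0 = 1 / a := by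
    simp [hg_def, hE0]
  -- FTC identity for T > 0
  have hident : ∀ T : ℝ, 0 < T →
      h T = c⁻¹ * ((E T - 1 + (2 / Real.sqrt Real.pi) * Real.sqrt (a * T)) / a) := by
    intro T hT
    have hftc : (∫ t in (0:ℝ)..T, E t) = g T - g 0 :=
      intervalIntegral.integral_eq_sub_of_hasDeriv_right_of_le hT.le
        hgcont.continuousOn
        (fun t ht => (hgderiv t ht.1).hasDerivWithinAt)
        (hEcont.intervalIntegrable 0 T)
    have hKE : (∫ t in (0:ℝ)..T, K t) = c⁻¹ * ∫ t in (0:ℝ)..T, E t := by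
      rw [← intervalIntegral.integral_const_mul]
      exact intervalIntegral.integral_congr fun t _ => hK' t
    rw [hh, hKE, hftc, hg0, hg_def]
    field_simp
    ring
  -- the limit
  have hsqrtπ : (0:ℝ) < Real.sqrt Real.pi := Real.sqrt_pos.2 Real.pi_pos
  have hκs : 0 < Real.sqrt κ := Real.sqrt_pos.2 hκ
  have hκκ : Real.sqrt κ * Real.sqrt κ = κ := Real.mul_self_sqrt hκ.le
  have hsqrta : Real.sqrt a = Real.sqrt κ / c := by
    rw [ha_def, Real.sqrt_div hκ.le, Real.sqrt_sq hc.le]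
  have hmulsqrt : Real.sqrt (Real.pi * κ) = Real.sqrt Real.pi * Real.sqrt κ :=
    Real.sqrt_mul Real.pi_pos.le κ
  rw [hmulsqrt]
  -- bound on E
  have hE2 : ∀ T : ℝ, 0 ≤ T → E T ≤ 2 := by
    intro T hT
    have hle := erfc_le_two_exp (Real.sqrt (a * T)) (Real.sqrt_nonneg _)
    rw [Real.sq_sqrt (by positivity : (0:ℝ) ≤ a * T)] at hle
    calc E T ≤ Real.exp (a * T) * (2 * Real.exp (-(a * T))) :=
          mul_le_mul_of_nonneg_left hle (Real.exp_pos _).le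
      _ = 2 := by
          rw [show Real.exp (a*T) * (2 * Real.exp (-(a*T)))
              = 2 * (Real.exp (a*T) * Real.exp (-(a*T))) by ring, ← Real.exp_add]
          simp
  have hlim0 : Tendsto (fun T : ℝ => (E T - 1) / Real.sqrt T) atTop (nhds 0) := by
    have hb : Tendsto (fun T : ℝ => (Real.sqrt T)⁻¹) atTop (nhds 0) :=
      tendsto_inv_atTop_zero.comp _root_.tendsto_sqrt_atTop
    apply squeeze_zero_norm' _ hb
    filter_upwards [eventually_ge_atTop (1:ℝ)] with T hT
    have hT0 : (0:ℝ) < T := lt_of_lt_of_le one_pos hT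
    have hsTpos : 0 < Real.sqrt T := Real.sqrt_pos.2 hT0
    have h1 : |E T - 1| ≤ 1 := abs_le.2 ⟨by linarith [hEpos T], by linarith [hE2 T hT0.le]⟩
    rw [Real.norm_eq_abs, abs_div, abs_of_nonneg (Real.sqrt_nonneg T), inv_eq_one_div]
    gcongr
  have hCA : c⁻¹ * ((2 / Real.sqrt Real.pi) * Real.sqrt a) / a
      = 2 / (Real.sqrt Real.pi * Real.sqrt κ) := by
    rw [hsqrta, ha_def]
    field_simp
    linear_combination hκκ
  have hF : Tendsto (fun T : ℝ => (c⁻¹ / a) * ((E T - 1) / Real.sqrt T)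
      + 2 / (Real.sqrt Real.pi * Real.sqrt κ)) atTop
      (nhds (2 / (Real.sqrt Real.pi * Real.sqrt κ))) := by
    have := (hlim0.const_mul (c⁻¹ / a)).add_const (2 / (Real.sqrt Real.pi * Real.sqrt κ))
    simpa using this
  apply hF.congr'
  filter_upwards [eventually_gt_atTop (0:ℝ)] with T hT
  have hsT : Real.sqrt (a * T) = Real.sqrt a * Real.sqrt T := Real.sqrt_mul ha.le T
  have hsTpos : 0 < Real.sqrt T := Real.sqrt_pos.2 hT
  rw [hident T hT, hsT, ← hCA]
  field_simp
end
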